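/- Let G be a group and let d : ℂ[G] → (G → ℂ) be any derivation with values in the convolution bimodule of all functions G → ℂ. Then the function χ_d(u,v) = (d δ_v)(u) is a character of the action groupoid of G: for all u, v, u', v' ∈ G with v'⁻¹u' = u v⁻¹, one has χ_d(u'v, v'v) = χ_d(u',v') + χ_d(u,v). Equivalently, for all x, g, h ∈ G: χ_d(x, gh) = χ_d(x h⁻¹, g) + χ_d(g⁻¹ x, h). -/

import Mathlib

/-- Left action of the group ring `ℂ[G]` on functions `G → ℂ` by convolution. -/
noncomputable def convL (G : Type*) [Group G] (x : MonoidAlgebra ℂ G) (f : G → ℂ) : G → ℂ :=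
  fun u => ∑ g ∈ x.coeff.support, x.coeff g * f (g⁻¹ * u)

/-- Right action of the group ring `ℂ[G]` on functions `G → ℂ` by convolution. -/
noncomputable def convR (G : Type*) [Group G] (f : G → ℂ) (x : MonoidAlgebra ℂ G) : G → ℂ :=
  fun u => ∑ g ∈ x.coeff.support, f (u * g⁻¹) * x.coeff g

/-- For any derivation `d : ℂ[G] → (G → ℂ)` into the convolution bimodule of all
functions, the function `χ_d(u,v) = (d δ_v)(u)` is a character of the action groupoid:
`χ_d(x, g*h) = χ_d(x*h⁻¹, g) + χ_d(g⁻¹*x, h)` for all `x g h : G`. -/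
theorem derivation_gives_groupoid_character
    (G : Type*) [Group G]
    (d : MonoidAlgebra ℂ G →ₗ[ℂ] (G → ℂ))
    (hder : ∀ x y : MonoidAlgebra ℂ G, d (x * y) = convR G (d x) y + convL G x (d y)) :
    ∀ x g h : G,
      d (MonoidAlgebra.single (g * h) (1 : ℂ)) x =
        d (MonoidAlgebra.single g (1 : ℂ)) (x * h⁻¹) +
          d (MonoidAlgebra.single h (1 : ℂ)) (g⁻¹ * x) := by
  intro x g h
  have hmul : (MonoidAlgebra.single (g * h) (1 : ℂ) : MonoidAlgebra ℂ G) =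
      MonoidAlgebra.single g 1 * MonoidAlgebra.single h 1 := by
    rw [MonoidAlgebra.single_mul_single, one_mul]
  rw [hmul, hder]
  have hs : ∀ a : G, (MonoidAlgebra.single a (1 : ℂ)).coeff.support = {a} :=
    fun a => by rw [MonoidAlgebra.coeff_single]; exact Finsupp.support_single_ne_zero a one_ne_zero
  simp [convL, convR, hs, MonoidAlgebra.coeff_single_apply]
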